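/- In the Euclidean plane ℝ², let x, y, a be points such that ∠(a, x, y) ≤ π/2 and the side xy is a longest side of the triangle, i.e. ‖a − x‖ ≤ ‖x − y‖ and ‖a − y‖ ≤ ‖x − y‖. Let y' be a point lying in the closed half-plane bounded by the line through x and y that contains a, with ∠(y, x, y') ≤ π/3 and ‖x − y'‖ ≥ ‖x − y‖. Then ‖y − y'‖ ≤ ‖x − y'‖ and ‖a − y'‖ ≤ ‖x − y'‖. -/

import Mathlib

set_option maxHeartbeats 1000000 in
lemma far_cone_key (U V W p q r c1 c2 : ℝ)
    (hU : 0 < U) (hV : 0 ≤ V) (hVU : V ≤ U) (hUW : U ≤ W)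
    (h2p : V^2 ≤ 2*p) (h2q : U*W ≤ 2*q)
    (hid : r*U^2 = p*q + c1*c2)
    (hc1 : c1^2 = U^2*V^2 - p^2) (hc2 : c2^2 = U^2*W^2 - q^2)
    (hcc : 0 ≤ c1*c2) : V^2 ≤ 2*r := by
  have hW : 0 < W := lt_of_lt_of_le hU hUW
  have hp0 : 0 ≤ p := by nlinarith [sq_nonneg V]
  have hq0 : 0 ≤ q := by nlinarith
  have hpUV : p ≤ U*V := by nlinarith [sq_nonneg c1, mul_nonneg hU.le hV]
  have hqUW : q ≤ U*W := by nlinarith [sq_nonneg c2, mul_pos hU hW]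
  have hD : 0 ≤ U*W - q := sub_nonneg.2 hqUW
  have hpUVn : 0 ≤ U*V - p := sub_nonneg.2 hpUV
  have esq : (c1*c2)^2 = (U^2*V^2 - p^2) * (U^2*W^2 - q^2) := by
    rw [mul_pow, hc1, hc2]
  rcases le_or_gt (p*W) (q*V) with h | h
  · -- case B : c1*c2 ≥ p*(U*W - q)
    have hbr : 0 ≤ U^2*V^2*(U*W+q) - 2*p^2*(U*W) := by
      nlinarith [mul_nonneg (mul_nonneg hp0 hU.le) (sub_nonneg.2 h),
        mul_nonneg (mul_nonneg (mul_nonneg hU.le hV) hq0) hpUVn,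
        mul_nonneg (sq_nonneg (U*V)) hD]
    have hsq : (p*(U*W - q))^2 ≤ (c1*c2)^2 := by
      rw [esq]; nlinarith [mul_nonneg hD hbr]
    have hkey : p*(U*W - q) ≤ c1*c2 := le_of_pow_le_pow_left₀ two_ne_zero hcc hsq
    clear hsq esq hc1 hc2 hbr hcc h
    have h1 : (V^2/2)*(U*W) ≤ r*U^2 := by
      nlinarith [mul_nonneg (by linarith : (0:ℝ) ≤ 2*p - V^2) (mul_nonneg hU.le hW.le)]
    clear hkey hid
    nlinarith [mul_nonneg (sq_nonneg V) (mul_nonneg hU.le (sub_nonneg.2 hUW)), mul_pos hU hU]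
  · -- case A : c1*c2 ≥ q*(U*V - p)
    have hbr : 0 ≤ (U*V+p)*(U^2*W^2) - 2*q^2*(U*V) := by
      nlinarith [mul_nonneg (mul_nonneg hq0 hU.le) (by nlinarith : (0:ℝ) ≤ p*W - q*V),
        mul_nonneg (mul_nonneg (mul_nonneg hp0 hU.le) hW.le) hD,
        mul_nonneg hpUVn (mul_nonneg (sq_nonneg U) (sq_nonneg W))]
    have hsq : (q*(U*V - p))^2 ≤ (c1*c2)^2 := by
      rw [esq]; nlinarith [mul_nonneg hpUVn hbr]
    have hkey : q*(U*V - p) ≤ c1*c2 := le_of_pow_le_pow_left₀ two_ne_zero hcc hsq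
    clear hsq esq hc1 hc2 hbr hcc h
    have hVW : V ≤ W := hVU.trans hUW
    have h1 : (U*W/2)*(U*V) ≤ r*U^2 := by
      nlinarith [mul_nonneg (by linarith : (0:ℝ) ≤ 2*q - U*W) (mul_nonneg hU.le hV)]
    clear hkey hid
    nlinarith [mul_nonneg (mul_nonneg (mul_pos hU hU).le hV) (sub_nonneg.2 hVW), mul_pos hU hU]

open EuclideanGeometry

/-- 2D cross product of coordinate vectors. -/
def farConeCross (f g : EuclideanSpace ℝ (Fin 2)) : ℝ := f 0 * g 1 - f 1 * g 0

lemma farConeCross_sub_smul (u f : EuclideanSpace ℝ (Fin 2)) (t : ℝ) :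
    farConeCross u (f - t • u) = farConeCross u f := by
  simp [farConeCross]; ring

lemma farConeCross_smul (u f : EuclideanSpace ℝ (Fin 2)) (t : ℝ) :
    farConeCross u (t • f) = t * farConeCross u f := by
  simp [farConeCross]; ring

lemma farConeCross_zero (u : EuclideanSpace ℝ (Fin 2)) : farConeCross u 0 = 0 := by
  simp [farConeCross]

lemma farCone_inner (f g : EuclideanSpace ℝ (Fin 2)) :
    inner ℝ f g = f 0 * g 0 + f 1 * g 1 := by
  simp [PiLp.inner_apply, Fin.sum_univ_two, RCLike.inner_apply]; ring

lemma farCone_norm_sq (f : EuclideanSpace ℝ (Fin 2)) : ‖f‖^2 = f 0^2 + f 1^2 := by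
  rw [← real_inner_self_eq_norm_sq]
  rw [farCone_inner]; ring

set_option linter.unusedVariables false in
set_option maxHeartbeats 1000000 in
/-- In the Euclidean plane, let `x, y, a` form a triangle with
`∠ a x y ≤ π/2` whose side `xy` is a longest side, and let `y'` lie in the closed
half-plane bounded by the line through `x` and `y` that contains `a`, with
`∠ y x y' ≤ π/3` and `‖x − y'‖ ≥ ‖x − y‖`.  Then `‖y − y'‖ ≤ ‖x − y'‖` and
`‖a − y'‖ ≤ ‖x − y'‖`. -/
theorem far_cone_bound
    (x y a y' : EuclideanSpace ℝ (Fin 2))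
    (hangle : ∠ a x y ≤ Real.pi / 2)
    (hax : dist a x ≤ dist x y) (hay : dist a y ≤ dist x y)
    (hside : (affineSpan ℝ {x, y}).WSameSide a y')
    (hangle' : ∠ y x y' ≤ Real.pi / 3)
    (hlong : dist x y ≤ dist x y') :
    dist y y' ≤ dist x y' ∧ dist a y' ≤ dist x y' := by
  have hπ := Real.pi_pos
  set u : EuclideanSpace ℝ (Fin 2) := y - x with hu
  set v : EuclideanSpace ℝ (Fin 2) := a - x with hv
  set w : EuclideanSpace ℝ (Fin 2) := y' - x with hw
  have hang : ∠ y x y' = InnerProductGeometry.angle u w := rfl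
  -- nonvanishing
  have hu0 : u ≠ 0 := by
    intro h
    rw [hang, h, InnerProductGeometry.angle_zero_left] at hangle'
    linarith
  have hw0 : w ≠ 0 := by
    intro h
    rw [hang, h, InnerProductGeometry.angle_zero_right] at hangle'
    linarith
  have hU : (0:ℝ) < ‖u‖ := norm_pos_iff.2 hu0
  have hWp : (0:ℝ) < ‖w‖ := norm_pos_iff.2 hw0
  -- angle ≤ π/3 gives inner bound
  have h2q : ‖u‖ * ‖w‖ ≤ 2 * (inner ℝ u w) := by
    have hcos : Real.cos (Real.pi / 3) ≤ Real.cos (InnerProductGeometry.angle u w) :=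
      Real.cos_le_cos_of_nonneg_of_le_pi (InnerProductGeometry.angle_nonneg u w)
        (by linarith) (by rw [← hang]; exact hangle')
    rw [Real.cos_pi_div_three] at hcos
    have := InnerProductGeometry.cos_angle_mul_norm_mul_norm u w
    nlinarith [mul_pos hU hWp]
  -- distance facts
  have hdxy : dist x y = ‖u‖ := by rw [dist_eq_norm, hu, norm_sub_rev]
  have hdxy' : dist x y' = ‖w‖ := by rw [dist_eq_norm, hw, norm_sub_rev]
  have hVU : ‖v‖ ≤ ‖u‖ := by rwa [dist_eq_norm, hdxy] at hax
  have hUW : ‖u‖ ≤ ‖w‖ := by rwa [hdxy, hdxy'] at hlong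
  have h2p : ‖v‖^2 ≤ 2 * (inner ℝ u v) := by
    rw [dist_eq_norm, hdxy] at hay
    have e : a - y = v - u := by rw [hv, hu]; abel
    rw [e] at hay
    have := norm_sub_sq_real v u
    have h2 : ‖v - u‖^2 ≤ ‖u‖^2 := by
      nlinarith [norm_nonneg (v - u), norm_nonneg u]
    nlinarith [real_inner_comm u v]
  -- same side gives cross-product sign
  have hcc : 0 ≤ farConeCross u v * farConeCross u w := by
    obtain ⟨p₁, hp₁, p₂, hp₂, hray⟩ := hside
    have hm : ∀ p : EuclideanSpace ℝ (Fin 2), p ∈ affineSpan ℝ ({x, y} : Set _) →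
        ∃ t : ℝ, p - x = t • u := by
      intro p hp
      have hd : p -ᵥ x ∈ vectorSpan ℝ ({x, y} : Set _) := by
        have := AffineSubspace.vsub_mem_direction hp (left_mem_affineSpan_pair ℝ x y)
        rwa [direction_affineSpan] at this
      obtain ⟨t, ht⟩ := mem_vectorSpan_pair_rev.mp hd
      exact ⟨t, by simpa [vsub_eq_sub, ← hu] using ht.symm⟩
    obtain ⟨t₁, ht₁⟩ := hm p₁ hp₁
    obtain ⟨t₂, ht₂⟩ := hm p₂ hp₂
    have e₁ : a -ᵥ p₁ = v - t₁ • u := by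
      rw [vsub_eq_sub, ← ht₁, hv]; abel
    have e₂ : y' -ᵥ p₂ = w - t₂ • u := by
      rw [vsub_eq_sub, ← ht₂, hw]; abel
    rw [e₁, e₂] at hray
    have c₁ : farConeCross u (v - t₁ • u) = farConeCross u v := farConeCross_sub_smul u v t₁
    have c₂ : farConeCross u (w - t₂ • u) = farConeCross u w := farConeCross_sub_smul u w t₂
    rcases hray with h | h | ⟨r₁, r₂, hr₁, hr₂, hr⟩
    · rw [← c₁, h, farConeCross_zero]; simp
    · rw [← c₂, h, farConeCross_zero]; simp
    · have heq := congrArg (farConeCross u) hr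
      rw [farConeCross_smul, farConeCross_smul, c₁, c₂] at heq
      have h1 : 0 ≤ r₁ * (farConeCross u v * farConeCross u w) := by
        rw [← mul_assoc, heq, mul_assoc]
        exact mul_nonneg hr₂.le (mul_self_nonneg _)
      exact (mul_nonneg_iff_of_pos_left hr₁).mp h1
  -- algebraic identities
  have hid : (inner ℝ v w) * ‖u‖^2 = (inner ℝ u v) * (inner ℝ u w)
      + farConeCross u v * farConeCross u w := by
    rw [farCone_inner, farCone_inner, farCone_inner, farCone_norm_sq]
    simp only [farConeCross]; ring
  have hc1 : (farConeCross u v)^2 = ‖u‖^2 * ‖v‖^2 - (inner ℝ u v)^2 := by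
    rw [farCone_inner, farCone_norm_sq, farCone_norm_sq]
    simp only [farConeCross]; ring
  have hc2 : (farConeCross u w)^2 = ‖u‖^2 * ‖w‖^2 - (inner ℝ u w)^2 := by
    rw [farCone_inner, farCone_norm_sq, farCone_norm_sq]
    simp only [farConeCross]; ring
  have hkey := far_cone_key ‖u‖ ‖v‖ ‖w‖ (inner ℝ u v) (inner ℝ u w) (inner ℝ v w)
    (farConeCross u v) (farConeCross u w) hU (norm_nonneg v) hVU hUW h2p h2q hid hc1 hc2 hcc
  constructor
  · -- dist y y' ≤ dist x y'
    rw [dist_eq_norm, hdxy']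
    have e : y - y' = u - w := by rw [hu, hw]; abel
    rw [e]
    have := norm_sub_sq_real u w
    have h2 : ‖u - w‖^2 ≤ ‖w‖^2 := by nlinarith [mul_pos hU hWp]
    nlinarith [norm_nonneg (u - w)]
  · -- dist a y' ≤ dist x y'
    rw [dist_eq_norm, hdxy']
    have e : a - y' = v - w := by rw [hv, hw]; abel
    rw [e]
    have := norm_sub_sq_real v w
    have h2 : ‖v - w‖^2 ≤ ‖w‖^2 := by nlinarith
    nlinarith [norm_nonneg (v - w)]
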